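/- Every agent-alternating formula satisfiable in some Kripke model is satisfiable in a Kripke model all of whose accessibility relations are transitive and Euclidean; moreover, if the original model has all relations serial, the transitive Euclidean model can be chosen with all relations serial as well. Consequently, K and K45 prove the same agent-alternating formulas, and KD and KD45 prove the same agent-alternating formulas. -/

import Mathlib

/-- Formulas of the multi-agent modal language: p | ¬φ | (φ ∧ φ) | □_a φ. -/
inductive Fm (A : Type) : Type
  | atom : ℕ → Fm A
  | neg : Fm A → Fm A
  | and : Fm A → Fm A → Fm A
  | box : A → Fm A → Fm A

namespace Fm
def imp {A : Type} (φ ψ : Fm A) : Fm A := .neg (.and φ (.neg ψ))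
def or {A : Type} (φ ψ : Fm A) : Fm A := .neg (.and (.neg φ) (.neg ψ))
def dia {A : Type} (a : A) (φ : Fm A) : Fm A := .neg (.box a (.neg φ))
end Fm

/-- Kripke models with agent set `A` and world type `W`. -/
structure Kripke (A W : Type) where
  R : A → W → W → Prop
  V : ℕ → W → Prop

/-- Satisfaction. -/
def Sat {A W : Type} (M : Kripke A W) : W → Fm A → Prop
  | w, .atom n => M.V n w
  | w, .neg φ => ¬ Sat M w φ
  | w, .and φ ψ => Sat M w φ ∧ Sat M w ψ
  | w, .box a φ => ∀ v, M.R a w v → Sat M v φ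

/-- The fragments L_{-a}: φ ::= p | □_x ψ (x ≠ a, ψ ∈ L_{-x}) | ¬φ | (φ ∧ φ). -/
inductive LMinus {A : Type} : A → Fm A → Prop
  | atom (a : A) (n : ℕ) : LMinus a (.atom n)
  | box {a x : A} {ψ : Fm A} : x ≠ a → LMinus x ψ → LMinus a (.box x ψ)
  | neg {a : A} {φ : Fm A} : LMinus a φ → LMinus a (.neg φ)
  | and {a : A} {φ ψ : Fm A} : LMinus a φ → LMinus a ψ → LMinus a (.and φ ψ)

/-- The agent-alternating fragment L_alt. -/
inductive LAlt {A : Type} : Fm A → Prop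
  | atom (n : ℕ) : LAlt (.atom n)
  | chi {φ : Fm A} (a : A) : LMinus a φ → LAlt φ
  | neg {φ : Fm A} : LAlt φ → LAlt (.neg φ)
  | and {φ ψ : Fm A} : LAlt φ → LAlt ψ → LAlt (.and φ ψ)

/-- The fragments L_X for X ⊆ A: φ ::= p | □_x ψ (x ∈ X, ψ ∈ L_{X\{x}}) | ¬φ | (φ ∧ φ). -/
inductive LX {A : Type} : Set A → Fm A → Prop
  | atom (X : Set A) (n : ℕ) : LX X (.atom n)
  | box {X : Set A} {x : A} {ψ : Fm A} : x ∈ X → LX (X \ {x}) ψ → LX X (.box x ψ)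
  | neg {X : Set A} {φ : Fm A} : LX X φ → LX X (.neg φ)
  | and {X : Set A} {φ ψ : Fm A} : LX X φ → LX X ψ → LX X (.and φ ψ)

/-- Immediate subformula relation. -/
inductive ISub {A : Type} : Fm A → Fm A → Prop
  | neg (φ : Fm A) : ISub φ (.neg φ)
  | andL (φ ψ : Fm A) : ISub φ (.and φ ψ)
  | andR (φ ψ : Fm A) : ISub ψ (.and φ ψ)
  | box (a : A) (φ : Fm A) : ISub φ (.box a φ)

/-- An occurrence type of φ: a nonempty sequence of formulas, each an immediate
subformula of the next, ending in φ. -/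
def IsOcc {A : Type} (l : List (Fm A)) (φ : Fm A) : Prop :=
  l ≠ [] ∧ l.getLast? = some φ ∧ List.Chain' ISub l

/-- A □_a-occurrence of φ. -/
def IsBoxOcc {A : Type} (a : A) (l : List (Fm A)) (φ : Fm A) : Prop :=
  IsOcc l φ ∧ ∃ β, l.head? = some (Fm.box a β)

/-- O ≤ O' iff O' is a suffix of O (prefix-extension order on occurrences). -/
def OccLe {A : Type} (O O' : List (Fm A)) : Prop := O' <:+ O

/-- φ is agent-alternating: between any two nested □_a-occurrences there is a
□_b-occurrence for some b ≠ a. -/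
def AgentAlternating {A : Type} (φ : Fm A) : Prop :=
  ∀ (a : A) (O O' : List (Fm A)), IsBoxOcc a O φ → IsBoxOcc a O' φ → O ≠ O' → OccLe O O' →
    ∃ b : A, b ≠ a ∧ ∃ O'' : List (Fm A), IsBoxOcc b O'' φ ∧ OccLe O O'' ∧ OccLe O'' O'

/-- φ is agent-nonrepeating: no □_a-occurrence lies below another □_a-occurrence. -/
def AgentNonrepeating {A : Type} (φ : Fm A) : Prop :=
  ∀ (a : A) (O O' : List (Fm A)), IsBoxOcc a O φ → IsBoxOcc a O' φ → O ≠ O' → ¬ OccLe O O'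

/-- Boolean evaluation treating atoms and boxed formulas as atomic. -/
def evalP {A : Type} (v : Fm A → Bool) : Fm A → Bool
  | .neg φ => ! evalP v φ
  | .and φ ψ => evalP v φ && evalP v ψ
  | φ => v φ

/-- Propositional tautologies (in the signature ¬, ∧, with boxed formulas atomic). -/
def Taut {A : Type} (φ : Fm A) : Prop := ∀ v : Fm A → Bool, evalP v φ = true

/-- Provability in the smallest normal modal logic containing the axioms `Ax`. -/
inductive Prv {A : Type} (Ax : Fm A → Prop) : Fm A → Prop
  | taut {φ : Fm A} : Taut φ → Prv Ax φ
  | ax {φ : Fm A} : Ax φ → Prv Ax φ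
  | k (a : A) (φ ψ : Fm A) :
      Prv Ax (Fm.imp (.box a (Fm.imp φ ψ)) (Fm.imp (.box a φ) (.box a ψ)))
  | mp {φ ψ : Fm A} : Prv Ax (Fm.imp φ ψ) → Prv Ax φ → Prv Ax ψ
  | nec {φ : Fm A} (a : A) : Prv Ax φ → Prv Ax (.box a φ)

def AxNone {A : Type} : Fm A → Prop := fun _ => False
def AxT {A : Type} : Fm A → Prop := fun χ => ∃ (a : A) (φ : Fm A), χ = Fm.imp (.box a φ) φ
def Ax4 {A : Type} : Fm A → Prop := fun χ => ∃ (a : A) (φ : Fm A), χ = Fm.imp (.box a φ) (.box a (.box a φ))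
def Ax5 {A : Type} : Fm A → Prop := fun χ => ∃ (a : A) (φ : Fm A), χ = Fm.imp (.neg (.box a φ)) (.box a (.neg (.box a φ)))
def AxB {A : Type} : Fm A → Prop := fun χ => ∃ (a : A) (φ : Fm A), χ = Fm.imp φ (.box a (Fm.dia a φ))
def AxD {A : Type} : Fm A → Prop := fun χ => ∃ (a : A) (φ : Fm A), χ = Fm.imp (.box a φ) (Fm.dia a φ)

def Ser {W : Type} (R : W → W → Prop) : Prop := ∀ u, ∃ v, R u v
def Eucl {W : Type} (R : W → W → Prop) : Prop := ∀ u v w, R u v → R u w → R v w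

/-- Agent-alternating bisimulation family (`none` plays the role of `alt`). -/
def IsAAFamily {A W1 W2 : Type} (M : Kripke A W1) (N : Kripke A W2)
    (f : Option A → W1 → W2 → Prop) : Prop :=
  ∀ (o : Option A) (u : W1) (v : W2), f o u v →
    (∀ n, M.V n u ↔ N.V n v) ∧
    (∀ b : A, o ≠ some b →
      (∀ u', M.R b u u' → ∃ v', N.R b v v' ∧ f (some b) u' v') ∧
      (∀ v', N.R b v v' → ∃ u', M.R b u u' ∧ f (some b) u' v'))

/-- Agent-nonrepeating bisimulation family. -/
def IsNRFamily {A W1 W2 : Type} (M : Kripke A W1) (N : Kripke A W2)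
    (f : Set A → W1 → W2 → Prop) : Prop :=
  ∀ (X : Set A) (u : W1) (v : W2), f X u v →
    (∀ n, M.V n u ↔ N.V n v) ∧
    (∀ x ∈ X,
      (∀ u', M.R x u u' → ∃ v', N.R x v v' ∧ f (X \ {x}) u' v') ∧
      (∀ v', N.R x v v' → ∃ u', M.R x u u' ∧ f (X \ {x}) u' v'))

/-- One step in an agent-alternating sequence. -/
def Step {A W : Type} (M : Kripke A W) : (Option A × W) → (Option A × W) → Prop :=
  fun x y => x.1 ≠ y.1 ∧ ∃ b : A, y.1 = some b ∧ M.R b x.2 y.2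

/-- Valid worlds of an agent-alternating unraveling. -/
def ValidSeq {A W : Type} (M : Kripke A W) (s : List (Option A × W)) : Prop :=
  s ≠ [] ∧ (∃ w, s.head? = some (none, w)) ∧ (∀ x ∈ s.tail, x.1 ≠ none) ∧
    List.Chain' (Step M) s

def UWorld {A W : Type} (M : Kripke A W) : Type := {s : List (Option A × W) // ValidSeq M s}

def lastEntry {A W : Type} {M : Kripke A W} (s : UWorld M) : Option A × W :=
  s.val.getLast s.prop.1

/-- N is an agent-alternating unraveling of M. -/
def IsAAUnraveling {A W : Type} (M : Kripke A W) (N : Kripke A (UWorld M)) : Prop :=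
  (∀ (b : A) (s : UWorld M), (lastEntry s).1 ≠ some b →
    ∀ t : UWorld M, N.R b s t ↔ ∃ w', M.R b (lastEntry s).2 w' ∧ t.val = s.val ++ [(some b, w')])
  ∧ (∀ n (s : UWorld M), N.V n s ↔ M.V n (lastEntry s).2)

/-- The canonical relation family between M and any of its agent-alternating unravelings. -/
def PFam {A W : Type} (M : Kripke A W) : Option A → W → UWorld M → Prop :=
  fun o u s => lastEntry s = (o, u)

/-- Finite agent-alternating bisimulation relations: `BisimN M N n (some a)` is ⇆_{-a}^n,
`BisimN M N n none` is ⇆_alt^n. -/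
def BisimN {A W1 W2 : Type} (M : Kripke A W1) (N : Kripke A W2) :
    ℕ → Option A → W1 → W2 → Prop
  | 0, _, u, v => ∀ n, M.V n u ↔ N.V n v
  | (n+1), o, u, v => (∀ m, M.V m u ↔ N.V m v) ∧
      ∀ b : A, o ≠ some b →
        (∀ u', M.R b u u' → ∃ v', N.R b v v' ∧ BisimN M N n (some b) u' v') ∧
        (∀ v', N.R b v v' → ∃ u', M.R b u u' ∧ BisimN M N n (some b) u' v')

/-- Standard n-bisimilarity. -/
def StdBisimN {A W1 W2 : Type} (M : Kripke A W1) (N : Kripke A W2) :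
    ℕ → W1 → W2 → Prop
  | 0, u, v => ∀ n, M.V n u ↔ N.V n v
  | (n+1), u, v => (∀ m, M.V m u ↔ N.V m v) ∧
      ∀ b : A,
        (∀ u', M.R b u u' → ∃ v', N.R b v v' ∧ StdBisimN M N n u' v') ∧
        (∀ v', N.R b v v' → ∃ u', M.R b u u' ∧ StdBisimN M N n u' v')


open Classical

namespace Toolkit

variable {A W : Type} {Ax : Fm A → Prop}

/-- Boolean evaluation matches Sat for the valuation `decide ∘ Sat`. -/
lemma evalP_sat (M : Kripke A W) (w : W) (φ : Fm A) :
    evalP (fun ψ => decide (Sat M w ψ)) φ = true ↔ Sat M w φ := by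
  induction φ with
  | atom n => simp [evalP, Sat]; exact ⟨of_decide_eq_true, decide_eq_true⟩
  | neg φ ih => simp [evalP, Sat, ← ih]
  | and φ ψ ih1 ih2 => simp [evalP, Sat, ih1, ih2]
  | box a φ ih => simp [evalP, Sat]; exact ⟨of_decide_eq_true, decide_eq_true⟩

lemma sat_of_taut {φ : Fm A} (h : Taut φ) (M : Kripke A W) (w : W) : Sat M w φ := by
  have := h (fun ψ => decide (Sat M w ψ))
  rwa [evalP_sat] at this

lemma sat_imp {M : Kripke A W} {w : W} {φ ψ : Fm A} :
    Sat M w (Fm.imp φ ψ) ↔ (Sat M w φ → Sat M w ψ) := by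
  simp only [Fm.imp, Sat]; tauto

end Toolkit

namespace Toolkit
variable {A : Type} {Ax : Fm A → Prop} {φ ψ χ ξ : Fm A}

def Ftop {A : Type} : Fm A := .imp (.atom 0) (.atom 0)

def conj {A : Type} : List (Fm A) → Fm A
  | [] => Ftop
  | φ :: l => .and φ (conj l)

lemma prv_top : Prv Ax (Ftop : Fm A) := by
  apply Prv.taut; intro v; simp only [Ftop, Fm.imp, evalP]
  cases v (Fm.atom 0) <;> rfl

lemma imp_trans (h1 : Prv Ax (φ.imp ψ)) (h2 : Prv Ax (ψ.imp χ)) : Prv Ax (φ.imp χ) := by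
  have t : Taut (Fm.imp (φ.imp ψ) ((ψ.imp χ).imp (φ.imp χ))) := by
    intro v; simp only [Fm.imp, evalP]
    cases evalP v φ <;> cases evalP v ψ <;> cases evalP v χ <;> rfl
  exact ((Prv.taut t).mp h1).mp h2

lemma imp_self : Prv Ax (φ.imp φ) := by
  apply Prv.taut; intro v; simp only [Fm.imp, evalP]
  cases evalP v φ <;> rfl

lemma const_imp (h : Prv Ax ψ) : Prv Ax (φ.imp ψ) := by
  have t : Taut (ψ.imp (φ.imp ψ)) := by
    intro v; simp only [Fm.imp, evalP]
    cases evalP v φ <;> cases evalP v ψ <;> rfl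
  exact (Prv.taut t).mp h

lemma and_left : Prv Ax ((φ.and ψ).imp φ) := by
  apply Prv.taut; intro v; simp only [Fm.imp, evalP]
  cases evalP v φ <;> cases evalP v ψ <;> rfl

lemma and_right : Prv Ax ((φ.and ψ).imp ψ) := by
  apply Prv.taut; intro v; simp only [Fm.imp, evalP]
  cases evalP v φ <;> cases evalP v ψ <;> rfl

lemma and_intro_imp (h1 : Prv Ax (χ.imp φ)) (h2 : Prv Ax (χ.imp ψ)) :
    Prv Ax (χ.imp (φ.and ψ)) := by
  have t : Taut ((χ.imp φ).imp ((χ.imp ψ).imp (χ.imp (φ.and ψ)))) := by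
    intro v; simp only [Fm.imp, evalP]
    cases evalP v φ <;> cases evalP v ψ <;> cases evalP v χ <;> rfl
  exact ((Prv.taut t).mp h1).mp h2

lemma and_intro2 : Prv Ax (φ.imp (ψ.imp (φ.and ψ))) := by
  apply Prv.taut; intro v; simp only [Fm.imp, evalP]
  cases evalP v φ <;> cases evalP v ψ <;> rfl

lemma uncurry (h : Prv Ax (φ.imp (ψ.imp χ))) : Prv Ax ((φ.and ψ).imp χ) := by
  have t : Taut ((φ.imp (ψ.imp χ)).imp ((φ.and ψ).imp χ)) := by
    intro v; simp only [Fm.imp, evalP]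
    cases evalP v φ <;> cases evalP v ψ <;> cases evalP v χ <;> rfl
  exact (Prv.taut t).mp h

lemma and_mono_right (h : Prv Ax (ψ.imp χ)) : Prv Ax ((φ.and ψ).imp (φ.and χ)) := by
  exact and_intro_imp and_left (imp_trans and_right h)

lemma neg_and_of (h1 : Prv Ax (φ.imp χ.neg)) (h2 : Prv Ax (ψ.imp χ)) :
    Prv Ax (Fm.neg (φ.and ψ)) := by
  have t : Taut ((φ.imp χ.neg).imp ((ψ.imp χ).imp (Fm.neg (φ.and ψ)))) := by
    intro v; simp only [Fm.imp, evalP]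
    cases evalP v φ <;> cases evalP v ψ <;> cases evalP v χ <;> rfl
  exact ((Prv.taut t).mp h1).mp h2

lemma dne_imp : Prv Ax ((φ.neg.neg).imp φ) := by
  apply Prv.taut; intro v; simp only [Fm.imp, evalP]
  cases evalP v φ <;> rfl

lemma contrapose_rule (h1 : Prv Ax (φ.imp ψ)) (h2 : Prv Ax ψ.neg) : Prv Ax φ.neg := by
  have t : Taut ((φ.imp ψ).imp (ψ.neg.imp φ.neg)) := by
    intro v; simp only [Fm.imp, evalP]
    cases evalP v φ <;> cases evalP v ψ <;> rfl
  exact (((Prv.taut t).mp h1)).mp h2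

/-- box distributes: from ⊢ φ→ψ infer ⊢ □φ→□ψ -/
lemma box_mono (a : A) (h : Prv Ax (φ.imp ψ)) : Prv Ax ((Fm.box a φ).imp (.box a ψ)) :=
  (Prv.k a φ ψ).mp (Prv.nec a h)

lemma box_and (a : A) : Prv Ax (((Fm.box a φ).and (.box a ψ)).imp (.box a (φ.and ψ))) := by
  have h1 : Prv Ax ((Fm.box a φ).imp (.box a (ψ.imp (φ.and ψ)))) := box_mono a and_intro2
  have h2 : Prv Ax ((Fm.box a (ψ.imp (φ.and ψ))).imp ((Fm.box a ψ).imp (.box a (φ.and ψ)))) :=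
    Prv.k a ψ (φ.and ψ)
  exact uncurry (imp_trans h1 h2)

lemma conj_map_box (a : A) (l : List (Fm A)) :
    Prv Ax ((conj (l.map (Fm.box a))).imp (.box a (conj l))) := by
  induction l with
  | nil => exact const_imp (Prv.nec a prv_top)
  | cons χ l ih =>
      simp only [List.map_cons, conj]
      exact imp_trans (and_mono_right ih) (box_and a)

lemma conj_box (a : A) (l : List (Fm A)) (h : Prv Ax ((conj l).imp ψ)) :
    Prv Ax ((conj (l.map (Fm.box a))).imp (.box a ψ)) := by
  have h2 : Prv Ax ((Fm.box a (conj l)).imp (.box a ψ)) := box_mono a h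
  exact imp_trans (conj_map_box a l) h2

end Toolkit

namespace Toolkit
variable {A : Type} {Ax : Fm A → Prop} {φ ψ χ : Fm A}

def Con (Ax : Fm A → Prop) (S : Set (Fm A)) : Prop :=
  ¬ ∃ l : List (Fm A), (∀ ψ ∈ l, ψ ∈ S) ∧ Prv Ax (Fm.neg (conj l))

def MCS (Ax : Fm A → Prop) (S : Set (Fm A)) : Prop :=
  Con Ax S ∧ ∀ φ, φ ∈ S ∨ Fm.neg φ ∈ S

lemma con_mono {S S' : Set (Fm A)} (h : S ⊆ S') (hc : Con Ax S') : Con Ax S :=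
  fun ⟨l, hl, hp⟩ => hc ⟨l, fun ψ hψ => h (hl ψ hψ), hp⟩

/-- removing φ from a list, keeping it as an extra conjunct -/
lemma conj_filter (φ : Fm A) (l : List (Fm A)) :
    Prv Ax ((φ.and (conj (l.filter (fun ψ => !(decide (ψ = φ)))))).imp (conj l)) := by
  induction l with
  | nil => exact const_imp prv_top
  | cons ψ l ih =>
      by_cases h : ψ = φ
      · rw [h]
        have hd : List.filter (fun ψ => !(decide (ψ = φ))) (φ :: l)
            = List.filter (fun ψ => !(decide (ψ = φ))) l := by simp
        rw [hd]
        exact and_intro_imp and_left ih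
      · have hd : List.filter (fun ψ' => !(decide (ψ' = φ))) (ψ :: l)
            = ψ :: List.filter (fun ψ' => !(decide (ψ' = φ))) l := by simp [h]
        rw [hd]
        simp only [conj]
        exact and_intro_imp (imp_trans and_right and_left)
          (imp_trans (and_intro_imp and_left (imp_trans and_right and_right)) ih)

lemma incon_insert {S : Set (Fm A)} {φ : Fm A} (h : ¬ Con Ax (insert φ S)) :
    ∃ l : List (Fm A), (∀ ψ ∈ l, ψ ∈ S) ∧ Prv Ax ((conj l).imp φ.neg) := by
  rw [Con, not_not] at h
  obtain ⟨l, hl, hp⟩ := h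
  refine ⟨l.filter (fun ψ => !(decide (ψ = φ))), ?_, ?_⟩
  · intro ψ hψ
    rw [List.mem_filter] at hψ
    rcases hl ψ hψ.1 with h1 | h1
    · exfalso; revert hψ; simp [h1]
    · exact h1
  · have h1 : Prv Ax ((φ.and (conj (l.filter (fun ψ => !(decide (ψ = φ)))))).imp (conj l)) :=
      conj_filter φ l
    have t : Taut (((φ.and (conj (l.filter (fun ψ => !(decide (ψ = φ)))))).imp (conj l)).imp
        ((Fm.neg (conj l)).imp ((conj (l.filter (fun ψ => !(decide (ψ = φ))))).imp φ.neg))) := by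
      intro v; simp only [Fm.imp, evalP]
      cases evalP v φ <;> cases evalP v (conj l) <;>
        cases evalP v (conj (l.filter (fun ψ => !(decide (ψ = φ))))) <;> rfl
    exact (((Prv.taut t).mp h1).mp hp)

lemma conj_append (l1 l2 : List (Fm A)) :
    Prv Ax ((conj (l1 ++ l2)).imp ((conj l1).and (conj l2))) := by
  induction l1 with
  | nil => exact and_intro_imp (const_imp prv_top) imp_self
  | cons ψ l1 ih =>
      simp only [List.cons_append, conj]
      exact and_intro_imp
        (and_intro_imp and_left (imp_trans and_right (imp_trans ih and_left)))
        (imp_trans and_right (imp_trans ih and_right))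

lemma lindenbaum {S : Set (Fm A)} (h : Con Ax S) : ∃ T, S ⊆ T ∧ MCS Ax T := by
  obtain ⟨T, hST, hmem, hmax'⟩ :=
    zorn_subset_nonempty {T : Set (Fm A) | Con Ax T ∧ S ⊆ T}
      (fun c hc hchain hne => by
        refine ⟨⋃₀ c, ⟨?_, ?_⟩, fun s hs => Set.subset_sUnion_of_mem hs⟩
        · rintro ⟨l, hl, hp⟩
          have key : ∀ l' : List (Fm A), (∀ ψ ∈ l', ψ ∈ ⋃₀ c) → ∃ T ∈ c, ∀ ψ ∈ l', ψ ∈ T := by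
            intro l'
            induction l' with
            | nil => intro _; obtain ⟨T, hT⟩ := hne; exact ⟨T, hT, by simp⟩
            | cons ψ l' ih =>
                intro hmem
                obtain ⟨T, hTc, hT⟩ := ih (fun χ hχ => hmem χ (List.mem_cons_of_mem _ hχ))
                obtain ⟨T', hT'c, hψ⟩ := hmem ψ (List.mem_cons_self)
                rcases hchain.total hTc hT'c with hsub | hsub
                · exact ⟨T', hT'c, by
                    intro χ hχ
                    rcases List.mem_cons.mp hχ with rfl | hχ
                    · exact hψ
                    · exact hsub (hT χ hχ)⟩
                · exact ⟨T, hTc, by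
                    intro χ hχ
                    rcases List.mem_cons.mp hχ with rfl | hχ
                    · exact hsub hψ
                    · exact hT χ hχ⟩
          obtain ⟨T, hTc, hT⟩ := key l hl
          exact (hc hTc).1 ⟨l, hT, hp⟩
        · obtain ⟨T, hT⟩ := hne
          exact (hc hT).2.trans (Set.subset_sUnion_of_mem hT))
      S ⟨h, subset_rfl⟩
  have hTcon : Con Ax T := hmem.1
  have hmax : ∀ T' , (Con Ax T' ∧ S ⊆ T') → T ⊆ T' → T' ⊆ T := fun T' h1 h2 => hmax' h1 h2
  refine ⟨T, hST, hTcon, ?_⟩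
  intro φ
  by_contra hcon
  push_neg at hcon
  obtain ⟨hφ, hnφ⟩ := hcon
  have hins : ∀ χ : Fm A, χ ∉ T → ¬ Con Ax (insert χ T) := by
    intro χ hχ hconχ
    exact hχ (hmax (insert χ T) ⟨hconχ, hST.trans (Set.subset_insert _ _)⟩
      (Set.subset_insert _ _) (Set.mem_insert _ _))
  obtain ⟨l1, hl1, hp1⟩ := incon_insert (hins φ hφ)
  obtain ⟨l2, hl2, hp2⟩ := incon_insert (hins (Fm.neg φ) hnφ)
  -- hp1 : conj l1 → ¬φ, hp2 : conj l2 → ¬¬φ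
  have h2' : Prv Ax ((conj l2).imp φ) := imp_trans hp2 dne_imp
  have hna : Prv Ax (Fm.neg ((conj l1).and (conj l2))) := neg_and_of hp1 h2'
  have : Prv Ax (Fm.neg (conj (l1 ++ l2))) := contrapose_rule (conj_append l1 l2) hna
  exact hTcon ⟨l1 ++ l2, by
    intro ψ hψ
    rcases List.mem_append.mp hψ with h | h
    · exact hl1 ψ h
    · exact hl2 ψ h, this⟩

end Toolkit

namespace Toolkit
variable {A : Type} {Ax : Fm A → Prop} {φ ψ χ : Fm A} {Γ : Set (Fm A)}

lemma mcs_not_both (hΓ : MCS Ax Γ) (h1 : φ ∈ Γ) (h2 : Fm.neg φ ∈ Γ) : False := by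
  apply hΓ.1
  refine ⟨[φ, Fm.neg φ], by intro ξ hξ; simp only [List.mem_cons, List.not_mem_nil, or_false] at hξ; rcases hξ with rfl|rfl <;> assumption, ?_⟩
  apply Prv.taut; intro v; simp only [conj, Fm.imp, evalP]
  cases evalP v φ <;> cases v (Fm.atom 0) <;> rfl

lemma mcs_mp (hΓ : MCS Ax Γ) (hp : Prv Ax (φ.imp ψ)) (h : φ ∈ Γ) : ψ ∈ Γ := by
  rcases hΓ.2 ψ with h2 | h2
  · exact h2
  · exfalso
    apply hΓ.1
    refine ⟨[φ, Fm.neg ψ], by intro ξ hξ; simp only [List.mem_cons, List.not_mem_nil, or_false] at hξ; rcases hξ with rfl|rfl <;> assumption, ?_⟩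
    have t : Taut ((φ.imp ψ).imp (Fm.neg (conj [φ, Fm.neg ψ]))) := by
      intro v; simp only [conj, Fm.imp, evalP]
      cases evalP v φ <;> cases evalP v ψ <;> cases v (Fm.atom 0) <;> rfl
    exact (Prv.taut t).mp hp

lemma mcs_prv (hΓ : MCS Ax Γ) (hp : Prv Ax φ) : φ ∈ Γ := by
  rcases hΓ.2 φ with h2 | h2
  · exact h2
  · exfalso
    apply hΓ.1
    refine ⟨[Fm.neg φ], by intro ξ hξ; simp only [List.mem_cons, List.not_mem_nil, or_false] at hξ; rcases hξ with rfl <;> assumption, ?_⟩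
    have t : Taut (φ.imp (Fm.neg (conj [Fm.neg φ]))) := by
      intro v; simp only [conj, Fm.imp, evalP]
      cases evalP v φ <;> cases v (Fm.atom 0) <;> rfl
    exact (Prv.taut t).mp hp

lemma mcs_mp2 (hΓ : MCS Ax Γ) (hp : Prv Ax (φ.imp (ψ.imp χ))) (h1 : φ ∈ Γ) (h2 : ψ ∈ Γ) :
    χ ∈ Γ := by
  rcases hΓ.2 χ with h3 | h3
  · exact h3
  · exfalso
    apply hΓ.1
    refine ⟨[φ, ψ, Fm.neg χ], by intro ξ hξ; simp only [List.mem_cons, List.not_mem_nil, or_false] at hξ; rcases hξ with rfl|rfl|rfl <;> assumption, ?_⟩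
    have t : Taut ((φ.imp (ψ.imp χ)).imp (Fm.neg (conj [φ, ψ, Fm.neg χ]))) := by
      intro v; simp only [conj, Fm.imp, evalP]
      cases evalP v φ <;> cases evalP v ψ <;> cases evalP v χ <;> cases v (Fm.atom 0) <;> rfl
    exact (Prv.taut t).mp hp

lemma mcs_neg_iff (hΓ : MCS Ax Γ) : Fm.neg φ ∈ Γ ↔ φ ∉ Γ := by
  constructor
  · intro h2 h1; exact mcs_not_both hΓ h1 h2
  · intro h; rcases hΓ.2 φ with h1 | h1
    · exact absurd h1 h
    · exact h1

lemma mcs_and_iff (hΓ : MCS Ax Γ) : φ.and ψ ∈ Γ ↔ φ ∈ Γ ∧ ψ ∈ Γ := by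
  constructor
  · intro h; exact ⟨mcs_mp hΓ and_left h, mcs_mp hΓ and_right h⟩
  · intro ⟨h1, h2⟩; exact mcs_mp2 hΓ and_intro2 h1 h2

lemma mcs_conj (hΓ : MCS Ax Γ) (l : List (Fm A)) (hl : ∀ ψ ∈ l, ψ ∈ Γ) : conj l ∈ Γ := by
  induction l with
  | nil => exact mcs_prv hΓ prv_top
  | cons ψ l ih =>
      exact (mcs_and_iff hΓ).mpr ⟨hl ψ (List.mem_cons_self),
        ih (fun χ hχ => hl χ (List.mem_cons_of_mem _ hχ))⟩

/-- If □ψ ∉ Γ then {χ | □χ ∈ Γ} ∪ {¬ψ} is consistent. -/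
lemma boxset_con (hΓ : MCS Ax Γ) {a : A} (h : Fm.box a ψ ∉ Γ) :
    Con Ax (insert (Fm.neg ψ) {χ | Fm.box a χ ∈ Γ}) := by
  by_contra hc
  obtain ⟨l, hl, hp⟩ := incon_insert hc
  have hp2 : Prv Ax ((conj l).imp ψ) := imp_trans hp dne_imp
  have hbox : Prv Ax ((conj (l.map (Fm.box a))).imp (.box a ψ)) := conj_box a l hp2
  have hmem : conj (l.map (Fm.box a)) ∈ Γ := by
    apply mcs_conj hΓ
    intro χ hχ
    obtain ⟨ξ, hξ, rfl⟩ := List.mem_map.mp hχ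
    exact hl ξ hξ
  exact h (mcs_mp hΓ hbox hmem)

def canonW (Ax : Fm A → Prop) : Type := {S : Set (Fm A) // MCS Ax S}

def canonM (Ax : Fm A → Prop) : Kripke A (canonW Ax) :=
  ⟨fun a Γ Δ => ∀ χ, Fm.box a χ ∈ Γ.1 → χ ∈ Δ.1, fun n Γ => Fm.atom n ∈ Γ.1⟩

lemma truth_lemma (φ : Fm A) : ∀ Γ : canonW Ax, Sat (canonM Ax) Γ φ ↔ φ ∈ Γ.1 := by
  induction φ with
  | atom n => intro Γ; rfl
  | neg φ ih => intro Γ; rw [show Sat (canonM Ax) Γ φ.neg = ¬ Sat (canonM Ax) Γ φ from rfl,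
      ih Γ, mcs_neg_iff Γ.2]
  | and φ ψ ih1 ih2 =>
      intro Γ
      rw [show Sat (canonM Ax) Γ (φ.and ψ) = (Sat (canonM Ax) Γ φ ∧ Sat (canonM Ax) Γ ψ) from rfl,
        ih1 Γ, ih2 Γ, mcs_and_iff Γ.2]
  | box a φ ih =>
      intro Γ
      constructor
      · intro h
        by_contra hb
        obtain ⟨T, hsub, hT⟩ := lindenbaum (boxset_con Γ.2 hb)
        have hR : (canonM Ax).R a Γ ⟨T, hT⟩ := fun χ hχ => hsub (Set.mem_insert_of_mem _ hχ)
        have := (ih ⟨T, hT⟩).mp (h _ hR)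
        exact mcs_not_both hT this (hsub (Set.mem_insert _ _))
      · intro h Δ hΔ
        exact (ih Δ).mpr (hΔ φ h)

lemma completeness (h : ¬ Prv Ax φ) :
    ∃ Γ : canonW Ax, Sat (canonM Ax) Γ (Fm.neg φ) := by
  have hcon : Con Ax (insert (Fm.neg φ) ∅) := by
    by_contra hc
    obtain ⟨l, hl, hp⟩ := incon_insert hc
    have hnil : l = [] := by
      cases l with
      | nil => rfl
      | cons ψ l => exact absurd (hl ψ (List.mem_cons_self)) (Set.notMem_empty _)
    subst hnil
    exact h ((Prv.taut (by
      intro v; simp only [Fm.imp, evalP]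
      cases evalP v φ <;> rfl : Taut ((Fm.neg (Fm.neg φ)).imp φ))).mp (hp.mp prv_top))
  obtain ⟨T, hsub, hT⟩ := lindenbaum hcon
  exact ⟨⟨T, hT⟩, (truth_lemma (Fm.neg φ) ⟨T, hT⟩).mpr (hsub (Set.mem_insert _ _))⟩

lemma canon_serial (hD : ∀ (a : A) (φ : Fm A), Ax (Fm.imp (.box a φ) (Fm.dia a φ))) :
    ∀ a, Ser ((canonM Ax).R a) := by
  intro a Γ
  have hcon : Con Ax {χ | Fm.box a χ ∈ Γ.1} := by
    rintro ⟨l, hl, hp⟩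
    have h1 : Prv Ax ((conj (l.map (Fm.box a))).imp (.box a (conj l))) := conj_map_box a l
    have hmem : Fm.box a (conj l) ∈ Γ.1 :=
      mcs_mp Γ.2 h1 (mcs_conj Γ.2 _ (by
        intro χ hχ
        obtain ⟨ξ, hξ, rfl⟩ := List.mem_map.mp hχ
        exact hl ξ hξ))
    have hdia : Fm.dia a (conj l) ∈ Γ.1 := mcs_mp Γ.2 (Prv.ax (hD a (conj l))) hmem
    have hneg : Fm.box a (Fm.neg (conj l)) ∈ Γ.1 := mcs_prv Γ.2 (Prv.nec a hp)
    exact mcs_not_both Γ.2 hneg hdia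
  obtain ⟨T, hsub, hT⟩ := lindenbaum hcon
  exact ⟨⟨T, hT⟩, fun χ hχ => hsub hχ⟩

end Toolkit

namespace Toolkit
variable {A W : Type} {Ax : Fm A → Prop} {φ ψ : Fm A}

lemma sat_neg {M : Kripke A W} {w : W} : Sat M w (Fm.neg φ) ↔ ¬ Sat M w φ := Iff.rfl
lemma sat_box {M : Kripke A W} {w : W} {a : A} :
    Sat M w (Fm.box a φ) ↔ ∀ v, M.R a w v → Sat M v φ := Iff.rfl

lemma soundness {M : Kripke A W} (hAx : ∀ χ, Ax χ → ∀ w, Sat M w χ)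
    (h : Prv Ax φ) : ∀ w, Sat M w φ := by
  induction h with
  | taut ht => exact fun w => sat_of_taut ht M w
  | ax ha => exact hAx _ ha
  | k a φ ψ =>
      intro w
      rw [sat_imp]; intro h1
      rw [sat_imp]; intro h2
      intro v hv
      exact sat_imp.mp (h1 v hv) (h2 v hv)
  | mp h1 h2 ih1 ih2 => exact fun w => sat_imp.mp (ih1 w) (ih2 w)
  | nec a h ih => exact fun w v _ => ih v

lemma prv_mono {Ax' : Fm A → Prop} (hsub : ∀ χ, Ax χ → Ax' χ) (h : Prv Ax φ) : Prv Ax' φ := by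
  induction h with
  | taut ht => exact Prv.taut ht
  | ax ha => exact Prv.ax (hsub _ ha)
  | k a φ ψ => exact Prv.k a φ ψ
  | mp _ _ ih1 ih2 => exact ih1.mp ih2
  | nec a _ ih => exact Prv.nec a ih

lemma valid4 {M : Kripke A W} (htr : ∀ a : A, Transitive (M.R a)) {χ : Fm A} (h : Ax4 χ) :
    ∀ w, Sat M w χ := by
  obtain ⟨a, φ, rfl⟩ := h
  intro w
  rw [sat_imp]
  intro h1 v hv u hu
  exact h1 u (htr a hv hu)

lemma valid5 {M : Kripke A W} (heu : ∀ a : A, Eucl (M.R a)) {χ : Fm A} (h : Ax5 χ) :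
    ∀ w, Sat M w χ := by
  obtain ⟨a, φ, rfl⟩ := h
  intro w
  rw [sat_imp]
  intro h1 v hv h2
  exact h1 (fun u hu => h2 u (heu a w v u hv hu))

lemma validD {M : Kripke A W} (hser : ∀ a : A, Ser (M.R a)) {χ : Fm A} (h : AxD χ) :
    ∀ w, Sat M w χ := by
  obtain ⟨a, φ, rfl⟩ := h
  intro w
  rw [sat_imp]
  intro h1
  obtain ⟨v, hv⟩ := hser a w
  rw [Fm.dia, sat_neg, sat_box]
  push_neg
  exact ⟨v, hv, not_not_intro (h1 v hv)⟩

end Toolkit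

namespace Unr
variable {A W : Type}

/-- tree edge relation of the agent-alternating unraveling -/
def T (M : Kripke A W) (b : A) (s t : UWorld M) : Prop :=
  (lastEntry s).1 ≠ some b ∧ ∃ v, M.R b (lastEntry s).2 v ∧ t.val = s.val ++ [(some b, v)]

/-- the transitive Euclidean model on the unraveling -/
def NM (M : Kripke A W) : Kripke A (UWorld M) where
  R := fun b s t => T M b s t ∨ ∃ r, T M b r s ∧ T M b r t
  V := fun n s => M.V n (lastEntry s).2

variable {M : Kripke A W}

lemma lastEntry_spec (s : UWorld M) : s.val.getLast? = some (lastEntry s) :=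
  List.getLast?_eq_getLast s.prop.1

lemma lastEntry_concat {s t : UWorld M} {x : Option A × W} (h : t.val = s.val ++ [x]) :
    lastEntry t = x := by
  have h1 := lastEntry_spec t
  rw [h, List.getLast?_concat] at h1
  exact (Option.some_inj.mp h1).symm

lemma T_last {b : A} {s t : UWorld M} (h : T M b s t) :
    (lastEntry t).1 = some b := by
  obtain ⟨_, v, _, hteq⟩ := h
  rw [lastEntry_concat hteq]

lemma T_parent_unique {b : A} {s r r' : UWorld M} (h : T M b r s) (h' : T M b r' s) :
    r = r' := by
  obtain ⟨_, v, _, h1⟩ := h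
  obtain ⟨_, v', _, h2⟩ := h'
  apply Subtype.ext
  have : r.val ++ [(some b, v)] = r'.val ++ [(some b, v')] := by rw [← h1, ← h2]
  have := congrArg List.dropLast this
  simpa using this

lemma NM_trans (b : A) : Transitive ((NM M).R b) := by
  rintro u v w (huv | ⟨r, hru, hrv⟩) (hvw | ⟨r', hr'v, hr'w⟩)
  · exact absurd (T_last huv) hvw.1
  · have : u = r' := T_parent_unique huv hr'v
    exact Or.inl (this ▸ hr'w)
  · exact absurd (T_last hrv) hvw.1
  · have : r = r' := T_parent_unique hrv hr'v
    exact Or.inr ⟨r, hru, this ▸ hr'w⟩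

lemma NM_eucl (b : A) : Eucl ((NM M).R b) := by
  rintro u v w (huv | ⟨r, hru, hrv⟩) (huw | ⟨r', hr'u, hr'w⟩)
  · exact Or.inr ⟨u, huv, huw⟩
  · exact absurd (T_last hr'u) huv.1
  · exact absurd (T_last hru) huw.1
  · have : r = r' := T_parent_unique hru hr'u
    exact Or.inr ⟨r, hrv, this ▸ hr'w⟩

lemma extend_valid (s : UWorld M) {b : A} {v : W}
    (hb : (lastEntry s).1 ≠ some b) (hR : M.R b (lastEntry s).2 v) :
    ValidSeq M (s.val ++ [(some b, v)]) := by
  obtain ⟨hne, ⟨w0, hw0⟩, htail, hch⟩ := s.prop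
  refine ⟨by simp, ⟨w0, ?_⟩, ?_, ?_⟩
  · rw [List.head?_append, hw0]; rfl
  · rw [List.tail_append_of_ne_nil hne]
    intro x hx
    rcases List.mem_append.mp hx with h | h
    · exact htail x h
    · simp only [List.mem_singleton] at h
      subst h; simp
  · change List.IsChain _ _
    rw [List.isChain_append]
    refine ⟨hch, List.isChain_singleton _, ?_⟩
    intro x hx y hy
    rw [lastEntry_spec s, Option.mem_def, Option.some_inj] at hx
    simp only [List.head?_cons, Option.mem_def, Option.some_inj] at hy
    subst hx; subst hy
    exact ⟨hb, b, rfl, hR⟩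

lemma parent_T {b : A} (s : UWorld M) (h : (lastEntry s).1 = some b) :
    ∃ r : UWorld M, T M b r s := by
  obtain ⟨hne, ⟨w0, hw0⟩, htail, hch⟩ := s.prop
  have hsplit : s.val.dropLast ++ [lastEntry s] = s.val := List.dropLast_concat_getLast hne
  have hdne : s.val.dropLast ≠ [] := by
    intro h0
    rw [h0, List.nil_append] at hsplit
    rw [← hsplit] at hw0
    simp only [List.head?_cons, Option.some_inj] at hw0
    rw [hw0] at h
    simp at h
  obtain ⟨x0, l0, hx0⟩ := List.exists_cons_of_ne_nil hdne
  have hval : s.val = x0 :: (l0 ++ [lastEntry s]) := by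
    rw [← hsplit, hx0]; rfl
  have hrvalid : ValidSeq M s.val.dropLast := by
    refine ⟨hdne, ⟨w0, ?_⟩, ?_, hch.prefix ⟨[lastEntry s], hsplit⟩⟩
    · rw [hval] at hw0
      simp only [List.head?_cons, Option.some_inj] at hw0
      rw [hx0]
      simp [hw0]
    · intro x hx
      apply htail x
      rw [hval, List.tail_cons]
      rw [hx0, List.tail_cons] at hx
      exact List.mem_append_left _ hx
  set r : UWorld M := ⟨s.val.dropLast, hrvalid⟩
  have hstep : Step M (lastEntry r) (lastEntry s) := by
    have hch2 := hch
    rw [← hsplit] at hch2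
    change List.IsChain _ _ at hch2
    rw [List.isChain_append] at hch2
    exact hch2.2.2 _ (lastEntry_spec r) _ (by simp)
  obtain ⟨hne', b', hb', hR⟩ := hstep
  have hbb : b' = b := by rw [h] at hb'; exact (Option.some_inj.mp hb').symm
  subst hbb
  refine ⟨r, ?_, (lastEntry s).2, hR, ?_⟩
  · rw [← h]; exact hne'
  · have : lastEntry s = (some b', (lastEntry s).2) := by
      rw [← h]
    rw [← this]
    exact hsplit.symm

lemma NM_serial (hser : ∀ a : A, Ser (M.R a)) (b : A) : Ser ((NM M).R b) := by
  intro s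
  by_cases h : (lastEntry s).1 = some b
  · obtain ⟨r, hT⟩ := parent_T s h
    exact ⟨s, Or.inr ⟨r, hT, hT⟩⟩
  · obtain ⟨v, hv⟩ := hser b (lastEntry s).2
    exact ⟨⟨s.val ++ [(some b, v)], extend_valid s h hv⟩, Or.inl ⟨h, v, hv, rfl⟩⟩

lemma NR_iff {b : A} {s : UWorld M} (hb : (lastEntry s).1 ≠ some b) (t : UWorld M) :
    (NM M).R b s t ↔ T M b s t := by
  constructor
  · rintro (h | ⟨r, hrs, hrt⟩)
    · exact h
    · exact absurd (T_last hrs) hb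
  · exact Or.inl

lemma key {φ : Fm A} {a : A} (h : LMinus a φ) :
    ∀ s : UWorld M, ((lastEntry s).1 = none ∨ (lastEntry s).1 = some a) →
      (Sat (NM M) s φ ↔ Sat M (lastEntry s).2 φ) := by
  induction h with
  | atom a n => intro s _; exact Iff.rfl
  | @box a x ψ hxa hψ ih =>
      intro s hs
      have hx : (lastEntry s).1 ≠ some x := by
        rcases hs with h | h <;> rw [h]
        · simp
        · intro heq
          exact hxa (Option.some_inj.mp heq).symm
      constructor
      · intro hsat v hv
        set t : UWorld M := ⟨s.val ++ [(some x, v)], extend_valid s hx hv⟩ with ht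
        have hT : T M x s t := ⟨hx, v, hv, rfl⟩
        have hsv := hsat t (Or.inl hT)
        have hlast : lastEntry t = (some x, v) := lastEntry_concat rfl
        have := (ih t (Or.inr (by rw [hlast]))).mp hsv
        rwa [hlast] at this
      · intro hsat t ht
        rw [NR_iff hx] at ht
        obtain ⟨_, v, hv, hteq⟩ := ht
        have hlast : lastEntry t = (some x, v) := lastEntry_concat hteq
        apply (ih t (Or.inr (by rw [hlast]))).mpr
        rw [hlast]
        exact hsat v hv
  | neg h ih => intro s hs; exact not_congr (ih s hs)
  | and h1 h2 ih1 ih2 => intro s hs; exact and_congr (ih1 s hs) (ih2 s hs)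

def root (M : Kripke A W) (w : W) : UWorld M :=
  ⟨[(none, w)], by simp, ⟨w, rfl⟩, by simp, List.isChain_singleton _⟩

lemma lastEntry_root (w : W) : lastEntry (root M w) = (none, w) := rfl

lemma key_alt {φ : Fm A} (h : LAlt φ) (w : W) :
    Sat (NM M) (root M w) φ ↔ Sat M w φ := by
  induction h with
  | atom n => exact Iff.rfl
  | chi a h =>
      have := key h (root M w) (Or.inl (by rw [lastEntry_root]))
      rwa [lastEntry_root] at this
  | neg h ih => exact not_congr ih
  | and h1 h2 ih1 ih2 => exact and_congr ih1 ih2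

end Unr

/-- satisfiable agent-alternating formulas are satisfiable on transitive Euclidean
models (preserving seriality); hence K = K45 and KD = KD45 on agent-alternating formulas. -/
theorem stmt3 {A : Type} (hA : ∃ a b : A, a ≠ b) :
    (∀ (φ : Fm A), LAlt φ →
      ∀ (W : Type) (M : Kripke A W) (w : W), Sat M w φ →
        ∃ (W' : Type) (M' : Kripke A W') (w' : W'),
          (∀ a : A, Transitive (M'.R a)) ∧ (∀ a : A, Eucl (M'.R a)) ∧
          ((∀ a : A, Ser (M.R a)) → ∀ a : A, Ser (M'.R a)) ∧ Sat M' w' φ) ∧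
    (∀ φ : Fm A, LAlt φ → (Prv AxNone φ ↔ Prv (fun χ => Ax4 χ ∨ Ax5 χ) φ)) ∧
    (∀ φ : Fm A, LAlt φ → (Prv AxD φ ↔ Prv (fun χ => AxD χ ∨ Ax4 χ ∨ Ax5 χ) φ)) := by
  have part1 : ∀ (φ : Fm A), LAlt φ →
      ∀ (W : Type) (M : Kripke A W) (w : W), Sat M w φ →
        ∃ (W' : Type) (M' : Kripke A W') (w' : W'),
          (∀ a : A, Transitive (M'.R a)) ∧ (∀ a : A, Eucl (M'.R a)) ∧
          ((∀ a : A, Ser (M.R a)) → ∀ a : A, Ser (M'.R a)) ∧ Sat M' w' φ := by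
    intro φ hφ W M w hsat
    exact ⟨UWorld M, Unr.NM M, Unr.root M w, Unr.NM_trans, Unr.NM_eucl,
      fun hser a => Unr.NM_serial hser a, (Unr.key_alt hφ w).mpr hsat⟩
  refine ⟨part1, ?_, ?_⟩
  · intro φ hφ
    constructor
    · exact Toolkit.prv_mono (fun χ h => h.elim)
    · intro h45
      by_contra hK
      obtain ⟨Γ, hΓ⟩ := Toolkit.completeness hK
      obtain ⟨W', M', w', htr, heu, _, hsat'⟩ := part1 (Fm.neg φ) (LAlt.neg hφ) _ _ _ hΓ
      have hAx : ∀ χ, (Ax4 χ ∨ Ax5 χ) → ∀ v, Sat M' v χ := by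
        rintro χ (h | h) v
        · exact Toolkit.valid4 htr h v
        · exact Toolkit.valid5 heu h v
      exact hsat' (Toolkit.soundness hAx h45 w')
  · intro φ hφ
    constructor
    · exact Toolkit.prv_mono (fun χ h => Or.inl h)
    · intro h45
      by_contra hK
      obtain ⟨Γ, hΓ⟩ := Toolkit.completeness hK
      have hser : ∀ a, Ser ((Toolkit.canonM (AxD (A := A))).R a) :=
        Toolkit.canon_serial (fun a ψ => ⟨a, ψ, rfl⟩)
      obtain ⟨W', M', w', htr, heu, hserial, hsat'⟩ := part1 (Fm.neg φ) (LAlt.neg hφ) _ _ _ hΓ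
      have hser' := hserial hser
      have hAx : ∀ χ, (AxD χ ∨ Ax4 χ ∨ Ax5 χ) → ∀ v, Sat M' v χ := by
        rintro χ (h | h | h) v
        · exact Toolkit.validD hser' h v
        · exact Toolkit.valid4 htr h v
        · exact Toolkit.valid5 heu h v
      exact hsat' (Toolkit.soundness hAx h45 w')
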